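/- In any run of the weighted picking sequence algorithm, for every step s and every agent i, it holds that | t_i(s) - (w_i/W) * s | <= w_i / w_min, where W is the sum of all weights and w_min is the minimum weight. -/

import Mathlib

open Finset

/-- `pickCount picker i s` is the number of picks made by agent `i` among the first `s` steps. -/
def pickCount {n m : ℕ} (picker : Fin m → Fin n) (i : Fin n) (s : ℕ) : ℕ :=
  (Finset.univ.filter fun s' : Fin m => (s' : ℕ) < s ∧ picker s' = i).card

/-- A run of the weighted picking sequence algorithm (for an arbitrary tie-breaking rule):
at step `s`, agent `picker s` picks item `item s`.  The picking agent must minimize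
`t_i / w_i` among all agents, and the picked item must maximize her utility among the
items that have not been picked at earlier steps. -/
structure IsWPSRun {n m : ℕ} (w : Fin n → ℝ) (u : Fin n → Fin m → ℝ)
    (picker : Fin m → Fin n) (item : Fin m → Fin m) : Prop where
  item_inj : Function.Injective item
  min_ratio : ∀ s : Fin m, ∀ j : Fin n,
    (pickCount picker (picker s) (s : ℕ) : ℝ) / w (picker s)
      ≤ (pickCount picker j (s : ℕ) : ℝ) / w j
  best_item : ∀ s g : Fin m, (∀ s' : Fin m, (s' : ℕ) < (s : ℕ) → item s' ≠ g) →
    u (picker s) g ≤ u (picker s) (item s)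

lemma pickCount_zero {n m : ℕ} (picker : Fin m → Fin n) (i : Fin n) :
    pickCount picker i 0 = 0 := by
  simp [pickCount]

lemma pickCount_succ {n m : ℕ} (picker : Fin m → Fin n) (i : Fin n) (s : ℕ) (hs : s < m) :
    pickCount picker i (s + 1)
      = pickCount picker i s + if picker ⟨s, hs⟩ = i then 1 else 0 := by
  unfold pickCount
  by_cases h : picker ⟨s, hs⟩ = i
  · rw [if_pos h]
    have he : (univ.filter fun s' : Fin m => (s' : ℕ) < s + 1 ∧ picker s' = i)
        = insert ⟨s, hs⟩ (univ.filter fun s' : Fin m => (s' : ℕ) < s ∧ picker s' = i) := by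
      ext x
      simp only [mem_filter, mem_univ, true_and, mem_insert, Nat.lt_succ_iff_lt_or_eq]
      constructor
      · rintro ⟨h1 | h1, h2⟩
        · exact Or.inr ⟨h1, h2⟩
        · exact Or.inl (Fin.ext h1)
      · rintro (rfl | ⟨h1, h2⟩)
        · exact ⟨Or.inr rfl, h⟩
        · exact ⟨Or.inl h1, h2⟩
    rw [he, card_insert_of_notMem (by simp [mem_filter])]
  · rw [if_neg h, add_zero]
    congr 1
    ext x
    simp only [mem_filter, mem_univ, true_and, Nat.lt_succ_iff_lt_or_eq]
    constructor
    · rintro ⟨h1 | h1, h2⟩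
      · exact ⟨h1, h2⟩
      · obtain rfl : x = ⟨s, hs⟩ := Fin.ext h1
        exact absurd h2 h
    · rintro ⟨h1, h2⟩; exact ⟨Or.inl h1, h2⟩

lemma pickCount_sum {n m : ℕ} (picker : Fin m → Fin n) :
    ∀ s : ℕ, s ≤ m → ∑ i, pickCount picker i s = s := by
  intro s
  induction s with
  | zero => intro _; simp [pickCount_zero]
  | succ s ih =>
    intro hs
    have hs' : s < m := hs
    rw [Finset.sum_congr rfl (fun i _ => pickCount_succ picker i s hs'),
      Finset.sum_add_distrib, ih (le_of_lt hs')]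
    simp

lemma wps_invariant {n m : ℕ} (w : Fin n → ℝ) (hw : ∀ i, 0 < w i)
    (u : Fin n → Fin m → ℝ) (picker : Fin m → Fin n) (item : Fin m → Fin m)
    (hrun : IsWPSRun w u picker item) :
    ∀ s : ℕ, s ≤ m → ∀ i j : Fin n,
      ((pickCount picker i s : ℝ) - 1) * w j ≤ (pickCount picker j s : ℝ) * w i := by
  intro s
  induction s with
  | zero =>
    intro _ i j
    simp only [pickCount_zero, Nat.cast_zero]
    nlinarith [hw i, hw j]
  | succ s ih =>
    intro hs i j
    have hs' : s < m := hs
    rw [pickCount_succ picker i s hs', pickCount_succ picker j s hs']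
    by_cases hi : picker ⟨s, hs'⟩ = i
    · subst hi
      have hm := hrun.min_ratio ⟨s, hs'⟩ j
      rw [div_le_div_iff₀ (hw _) (hw j)] at hm
      rw [if_pos rfl]
      push_cast
      split_ifs with hj
      · subst hj; nlinarith [hw (picker ⟨s, hs'⟩)]
      · nlinarith
    · have hih := ih (le_of_lt hs') i j
      push_cast
      rw [if_neg hi]
      split_ifs with hj
      · nlinarith [hw i]
      · linarith
/-- In any run of the weighted picking sequence algorithm, for every step `s` and every
agent `i`, we have `|t_i(s) - (w_i/W)·s| ≤ w_i / w_min`, where `W` is the sum of all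
weights and `w_min` is the minimum weight. -/
theorem wps_pickCount_proportional {n m : ℕ} (w : Fin n → ℝ) (hw : ∀ i, 0 < w i)
    (u : Fin n → Fin m → ℝ)
    (picker : Fin m → Fin n) (item : Fin m → Fin m)
    (hrun : IsWPSRun w u picker item) :
    ∀ s : ℕ, s ≤ m → ∀ i : Fin n,
      |(pickCount picker i s : ℝ) - w i / (∑ j, w j) * s|
        ≤ w i / (Finset.univ.inf' ⟨i, Finset.mem_univ i⟩ w) := by
  intro s hs i
  set t : Fin n → ℝ := fun j => (pickCount picker j s : ℝ) with ht
  have hsum : ∑ j, t j = (s : ℝ) := by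
    rw [ht, ← Nat.cast_sum, pickCount_sum picker s hs]
  have hinv := wps_invariant w hw u picker item hrun s hs
  set W := ∑ j, w j with hWdef
  set wm := univ.inf' ⟨i, Finset.mem_univ i⟩ w with hwmdef
  have hW : 0 < W := Finset.sum_pos (fun j _ => hw j) ⟨i, Finset.mem_univ i⟩
  have hwm : 0 < wm := (Finset.lt_inf'_iff _).mpr (fun j _ => hw j)
  have hwmi : wm ≤ w i := Finset.inf'_le _ (Finset.mem_univ i)
  have hn : (n : ℝ) * wm ≤ W := by
    have h1 : ∑ _j : Fin n, wm ≤ ∑ j, w j :=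
      Finset.sum_le_sum (fun j _ => Finset.inf'_le _ (Finset.mem_univ j))
    simpa [Finset.sum_const, nsmul_eq_mul] using h1
  -- upper bound
  have h1 : (t i - 1) * W ≤ (s : ℝ) * w i := by
    have h := Finset.sum_le_sum (fun j (_ : j ∈ univ) => hinv i j)
    rw [← Finset.mul_sum, ← Finset.sum_mul] at h
    rw [hsum] at h
    exact h
  have hub : t i - w i / W * s ≤ w i / wm := by
    have key : t i - 1 ≤ w i / W * s := by
      rw [← mul_le_mul_iff_of_pos_right hW]
      calc (t i - 1) * W ≤ (s : ℝ) * w i := h1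
        _ = w i / W * s * W := by field_simp
    have h2 : (1 : ℝ) ≤ w i / wm := (one_le_div hwm).mpr hwmi
    linarith
  -- lower bound
  have h3 : ((s : ℝ) - n) * w i ≤ t i * W := by
    have h := Finset.sum_le_sum (fun j (_ : j ∈ univ) => hinv j i)
    rw [← Finset.sum_mul, ← Finset.mul_sum] at h
    have e : ∑ j, ((t j) - 1) = (s : ℝ) - n := by
      rw [Finset.sum_sub_distrib, hsum]; simp
    rw [e] at h
    exact h
  have hlb : w i / W * s - t i ≤ w i / wm := by
    have h4 : w i / W * s - t i ≤ (n : ℝ) * w i / W := by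
      rw [← mul_le_mul_iff_of_pos_right hW]
      have e1 : (w i / W * s - t i) * W = (s : ℝ) * w i - t i * W := by
        field_simp
      have e2 : (n : ℝ) * w i / W * W = (n : ℝ) * w i := by
        field_simp
      rw [e1, e2]; linarith
    have h5 : (n : ℝ) * w i / W ≤ w i / wm := by
      rw [div_le_div_iff₀ hW hwm]
      nlinarith [hn, hw i, hwm]
    linarith
  rw [abs_le]
  constructor <;> linarith
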